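/- For linear orders A (nonempty) and J, and x ∈ J, a sealed rigid surjection s : A ⊕ J^x → A ⊕ 1 that is the identity on A is uniquely determined by its restriction to (A ⊕ J)^{x−}, where x− is the immediate predecessor of x in A ⊕ J; conversely, every function r : (A ⊕ J)^{x−} → A with r↾A = id_A extends uniquely to such a sealed A-rigid surjection sending x to the top element of A ⊕ 1. This gives a bijection between sealed A-rigid surjections A ⊕ J^x → A ⊕ 1 and functions (A ⊕ J)^{x−} → A that are identity on A. -/

import Mathlib

/-- Sealed `A`-rigid surjections `s : A ⊕ J^x → A ⊕ 1` (here `A ⊕ 1` is `WithTop A`;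
sealedness means the witnessing monotone `e` sends the top to the top, i.e. to `x`)
are in bijection with functions `(A ⊕ J)^{x⁻} → A` that are the identity on `A`,
where `x⁻` is the immediate predecessor of `x` in `A ⊕ J` and `ι` is the canonical
identification of `(A ⊕ J)^{x⁻}` with a subset of `A ⊕ J^x`: every such function `r`
extends uniquely to a sealed `A`-rigid surjection `s` with `s ∘ ι = r`. -/
theorem stmt16 (A J : Type) [LinearOrder A] [LinearOrder J] [Finite A] [Finite J]
    [Nonempty A] (x : J) (xm : A ⊕ₗ J)
    (hxm : xm < toLex (Sum.inr x) ∧ ∀ z, z < toLex (Sum.inr x) → z ≤ xm)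
    (ι : {z : A ⊕ₗ J // z ≤ xm} → (A ⊕ₗ {y : J // y ≤ x}))
    (hι1 : ∀ (a : A) (h : toLex (Sum.inl a) ≤ xm),
      ι ⟨toLex (Sum.inl a), h⟩ = toLex (Sum.inl a))
    (hι2 : ∀ (j : J) (h : toLex (Sum.inr j) ≤ xm) (hj : j ≤ x),
      ι ⟨toLex (Sum.inr j), h⟩ = toLex (Sum.inr ⟨j, hj⟩)) :
    ∀ r : {z : A ⊕ₗ J // z ≤ xm} → A,
      (∀ (a : A) (h : toLex (Sum.inl a) ≤ xm), r ⟨toLex (Sum.inl a), h⟩ = a) →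
      ∃! s : (A ⊕ₗ {y : J // y ≤ x}) → WithTop A,
        ((∀ a : A, s (toLex (Sum.inl a)) = (a : WithTop A)) ∧
         (∃ e : WithTop A → (A ⊕ₗ {y : J // y ≤ x}), Monotone e ∧
           (∀ z, s (e z) = z) ∧ (∀ w, e (s w) ≤ w) ∧
           e ⊤ = toLex (Sum.inr ⟨x, le_refl x⟩))) ∧
        (∀ z, s (ι z) = (r z : WithTop A)) := by
  intro r hr
  classical
  obtain ⟨hxm1, hxm2⟩ := hxm
  have hjlt : ∀ j : J, toLex (Sum.inr j : A ⊕ J) ≤ xm → j < x := fun j h =>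
    Sum.Lex.inr_lt_inr_iff.mp (lt_of_le_of_lt h hxm1)
  have hjle : ∀ j : J, j < x → toLex (Sum.inr j : A ⊕ J) ≤ xm := fun j h =>
    hxm2 _ (Sum.Lex.inr_lt_inr_iff.mpr h)
  refine ⟨fun w => Sum.rec (motive := fun _ => WithTop A) (fun (a : A) => (a : WithTop A))
      (fun (p : {y : J // y ≤ x}) => if h : p.1 = x then ⊤
        else (r ⟨toLex (Sum.inr p.1), hjle p.1 (lt_of_le_of_ne p.2 h)⟩ : WithTop A))
      (ofLex w), ⟨⟨?_, ?_⟩, ?_⟩, ?_⟩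
  · intro a; rfl
  · refine ⟨fun z => Option.rec (toLex (Sum.inr ⟨x, le_refl x⟩))
      (fun a => toLex (Sum.inl a)) z, ?_, ?_, ?_, rfl⟩
    · intro z z' h
      induction z using WithTop.recTopCoe with
      | top =>
        have hz : z' = ⊤ := top_le_iff.mp h
        subst hz; exact le_refl _
      | coe a =>
        induction z' using WithTop.recTopCoe with
        | top =>
          show toLex (Sum.inl a) ≤ toLex (Sum.inr (⟨x, le_refl x⟩ : {y : J // y ≤ x}))
          exact le_of_lt (Sum.Lex.inl_lt_inr a (⟨x, le_refl x⟩ : {y : J // y ≤ x}))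
        | coe b => exact Sum.Lex.inl_le_inl_iff.mpr (WithTop.coe_le_coe.mp h)
    · intro z
      induction z using WithTop.recTopCoe with
      | top => exact dif_pos rfl
      | coe a => rfl
    · intro w
      obtain ⟨w, rfl⟩ : ∃ v, toLex v = w := ⟨ofLex w, rfl⟩
      cases w with
      | inl a => exact le_refl _
      | inr p =>
        obtain ⟨j, hj⟩ := p
        by_cases hjx : j = x
        · subst hjx
          have h1 : (if h : j = j then (⊤ : WithTop A)
              else (r ⟨toLex (Sum.inr j), hjle j (lt_of_le_of_ne hj h)⟩ : WithTop A)) = ⊤ :=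
            dif_pos rfl
          show (Option.rec (toLex (Sum.inr ⟨j, le_refl j⟩)) (fun a => toLex (Sum.inl a))
              (if h : j = j then (⊤ : WithTop A)
                else (r ⟨toLex (Sum.inr j), hjle j (lt_of_le_of_ne hj h)⟩ : WithTop A))
              : A ⊕ₗ {y : J // y ≤ j}) ≤ toLex (Sum.inr ⟨j, hj⟩)
          exact le_of_eq (congrArg (fun t : WithTop A => (Option.rec (toLex (Sum.inr ⟨j, le_refl j⟩))
            (fun a => toLex (Sum.inl a)) t : A ⊕ₗ {y : J // y ≤ j})) h1)
        · show (Option.rec (toLex (Sum.inr ⟨x, le_refl x⟩)) (fun a => toLex (Sum.inl a))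
              (if h : j = x then (⊤ : WithTop A)
                else (r ⟨toLex (Sum.inr j), hjle j (lt_of_le_of_ne hj h)⟩ : WithTop A))
              : A ⊕ₗ {y : J // y ≤ x}) ≤ toLex (Sum.inr ⟨j, hj⟩)
          have h1' : (if h : j = x then (⊤ : WithTop A)
              else (r ⟨toLex (Sum.inr j), hjle j (lt_of_le_of_ne hj h)⟩ : WithTop A)) =
              (r ⟨toLex (Sum.inr j), hjle j (lt_of_le_of_ne hj hjx)⟩ : WithTop A) := dif_neg hjx
          exact (le_of_eq (congrArg (fun t : WithTop A => (Option.rec (toLex (Sum.inr ⟨x, le_refl x⟩))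
            (fun a => toLex (Sum.inl a)) t : A ⊕ₗ {y : J // y ≤ x})) h1')).trans
            (le_of_lt (Sum.Lex.inl_lt_inr _ _))
  · rintro ⟨w, hw⟩
    obtain ⟨w, rfl⟩ : ∃ v, toLex v = w := ⟨ofLex w, rfl⟩
    cases w with
    | inl a =>
      rw [hι1 a hw, hr a hw]; rfl
    | inr j =>
      have hjx := hjlt j hw
      rw [hι2 j hw (le_of_lt hjx)]
      show (if h : j = x then (⊤ : WithTop A)
          else (r ⟨toLex (Sum.inr j), hjle j (lt_of_le_of_ne (le_of_lt hjx) h)⟩ : WithTop A))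
          = (r ⟨toLex (Sum.inr j), hw⟩ : WithTop A)
      rw [dif_neg (ne_of_lt hjx)]
  · rintro s' ⟨⟨hA, e', hmono, hse, hes, htop⟩, hι'⟩
    funext w
    obtain ⟨w, rfl⟩ : ∃ v, toLex v = w := ⟨ofLex w, rfl⟩
    cases w with
    | inl a => rw [hA a]; rfl
    | inr p =>
      obtain ⟨j, hj⟩ := p
      by_cases hjx : j = x
      · subst hjx
        have h2 : toLex (Sum.inr (⟨j, hj⟩ : {y : J // y ≤ j})) = e' ⊤ := by rw [htop]
        conv_lhs => rw [h2]
        rw [hse]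
        show (⊤ : WithTop A) = if h : j = j then (⊤ : WithTop A)
          else ↑(r ⟨toLex (Sum.inr j), hjle j (lt_of_le_of_ne hj h)⟩)
        rw [dif_pos rfl]
      · have hjlt' : j < x := lt_of_le_of_ne hj hjx
        have h := hι' ⟨toLex (Sum.inr j), hjle j hjlt'⟩
        rw [hι2 j (hjle j hjlt') hj] at h
        rw [h]
        show (↑(r ⟨toLex (Sum.inr j), hjle j hjlt'⟩) : WithTop A) =
          if h : j = x then (⊤ : WithTop A)
          else ↑(r ⟨toLex (Sum.inr j), hjle j (lt_of_le_of_ne hj h)⟩)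
        rw [dif_neg hjx]
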